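/- arXiv:1712.06349 — 3 statements merged into one kernel-verified Lean document; each statement's English description precedes it below -/
import Mathlib

section
/- For every total Boolean function f, D(f) ≤ C_0(f) · C_1(f), where C_0 and C_1 denote the maximum certificate complexity over 0-inputs and 1-inputs respectively. In particular D(f) ≤ C(f)^2. -/
namespace QC

variable {ι : Type*} [Fintype ι] [DecidableEq ι]

/-- A total Boolean function on inputs indexed by `ι`. -/
abbrev BFun (ι : Type*) := (ι → Bool) → Bool

/-- Flip the bits of `x` in the set `S`. -/
def flip (x : ι → Bool) (S : Finset ι) : ι → Bool := fun i => if i ∈ S then !x i else x i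

/-- There exist `k` pairwise disjoint sensitive blocks for `f` at `x`. -/
def HasBS (f : BFun ι) (x : ι → Bool) (k : ℕ) : Prop :=
  ∃ S : Fin k → Finset ι, (∀ i j, i ≠ j → Disjoint (S i) (S j)) ∧ ∀ i, f (flip x (S i)) ≠ f x

/-- Block sensitivity of `f` at `x`. -/
noncomputable def bsAt (f : BFun ι) (x : ι → Bool) : ℕ := sSup {k | HasBS f x k}

/-- Block sensitivity of `f`. -/
noncomputable def bs (f : BFun ι) : ℕ := sSup {k | ∃ x, HasBS f x k}

/-- `S` is a certificate for `f` on input `x`. -/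
def IsCert (f : BFun ι) (x : ι → Bool) (S : Finset ι) : Prop :=
  ∀ y, (∀ i ∈ S, y i = x i) → f y = f x

/-- Certificate complexity of `f` at `x`. -/
noncomputable def CAt (f : BFun ι) (x : ι → Bool) : ℕ :=
  sInf {k | ∃ S : Finset ι, IsCert f x S ∧ S.card = k}

/-- Certificate complexity of `f`. -/
noncomputable def C (f : BFun ι) : ℕ := sSup (Set.range (CAt f))

/-- `b`-certificate complexity: max certificate complexity over inputs with value `b`. -/
noncomputable def Cb (f : BFun ι) (b : Bool) : ℕ := sSup {k | ∃ x, f x = b ∧ CAt f x = k}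

/-- Sensitivity of `f` at `x`. -/
def sensAt (f : BFun ι) (x : ι → Bool) : ℕ :=
  (Finset.univ.filter (fun i => f (flip x {i}) ≠ f x)).card

/-- Sensitivity of `f`. -/
noncomputable def sens (f : BFun ι) : ℕ := sSup (Set.range (sensAt f))

/-- Deterministic decision trees querying variables indexed by `ι`. -/
inductive DTree (ι : Type*) where
  | leaf (b : Bool)
  | node (i : ι) (t0 t1 : DTree ι)

/-- Evaluate a decision tree on input `x`. -/
def DTree.eval : DTree ι → (ι → Bool) → Bool
  | .leaf b, _ => b
  | .node i t0 t1, x => if x i then t1.eval x else t0.eval x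

/-- Depth (worst-case number of queries) of a decision tree. -/
def DTree.depth : DTree ι → ℕ
  | .leaf _ => 0
  | .node _ t0 t1 => max t0.depth t1.depth + 1

/-- The tree `T` computes `f`. -/
def Computes (T : DTree ι) (f : BFun ι) : Prop := ∀ x, T.eval x = f x

/-- Deterministic query (decision-tree) complexity. -/
noncomputable def D (f : BFun ι) : ℕ := sInf {d | ∃ T : DTree ι, Computes T f ∧ T.depth = d}

/-- A multilinear polynomial: degree at most 1 in each variable. -/
def Multilinear (p : MvPolynomial ι ℝ) : Prop := ∀ m ∈ p.support, ∀ i, m i ≤ 1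

/-- Embed Boolean inputs into the reals. -/
def b2r (x : ι → Bool) : ι → ℝ := fun i => if x i then 1 else 0

/-- `p` represents the Boolean function `f` on the Boolean cube. -/
def Represents (p : MvPolynomial ι ℝ) (f : BFun ι) : Prop :=
  ∀ x, MvPolynomial.eval (b2r x) p = if f x then 1 else 0

/-- Exact degree of `f`: least total degree of a multilinear representing polynomial. -/
noncomputable def degF (f : BFun ι) : ℕ :=
  sInf {d | ∃ p : MvPolynomial ι ℝ, Multilinear p ∧ Represents p f ∧ p.totalDegree = d}

end QC

section Stmt4Aux

variable {ι : Type*} [Fintype ι] [DecidableEq ι]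

lemma isCert_univ (f : QC.BFun ι) (x : ι → Bool) : QC.IsCert f x Finset.univ := by
  intro y hy
  have : y = x := funext fun i => hy i (Finset.mem_univ i)
  rw [this]

lemma cert_exists (f : QC.BFun ι) (x : ι → Bool) :
    ∃ S : Finset ι, QC.IsCert f x S ∧ S.card = QC.CAt f x := by
  have hne : {k | ∃ S : Finset ι, QC.IsCert f x S ∧ S.card = k}.Nonempty :=
    ⟨Finset.univ.card, Finset.univ, isCert_univ f x, rfl⟩
  exact Nat.sInf_mem hne

noncomputable def certOf (f : QC.BFun ι) (x : ι → Bool) : Finset ι :=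
  (cert_exists f x).choose

lemma certOf_isCert (f : QC.BFun ι) (x : ι → Bool) : QC.IsCert f x (certOf f x) :=
  (cert_exists f x).choose_spec.1

lemma certOf_card (f : QC.BFun ι) (x : ι → Bool) : (certOf f x).card = QC.CAt f x :=
  (cert_exists f x).choose_spec.2

lemma CAt_le_card (f : QC.BFun ι) (x : ι → Bool) : QC.CAt f x ≤ Fintype.card ι :=
  Nat.sInf_le ⟨Finset.univ, isCert_univ f x, Finset.card_univ⟩

lemma bddAbove_Cb (f : QC.BFun ι) (b : Bool) :
    BddAbove {k | ∃ x, f x = b ∧ QC.CAt f x = k} := by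
  refine ⟨Fintype.card ι, ?_⟩
  rintro k ⟨x, -, rfl⟩
  exact CAt_le_card f x

lemma CAt_le_Cb (f : QC.BFun ι) (x : ι → Bool) : QC.CAt f x ≤ QC.Cb f (f x) :=
  le_csSup (bddAbove_Cb f (f x)) ⟨x, rfl, rfl⟩

lemma Cb_le_C (f : QC.BFun ι) (b : Bool) : QC.Cb f b ≤ QC.C f := by
  apply csSup_le'
  rintro k ⟨x, -, rfl⟩
  exact le_csSup ⟨Fintype.card ι, by rintro k ⟨x, rfl⟩; exact CAt_le_card f x⟩ ⟨x, rfl⟩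

/-- Query all variables in the list `l`, recording answers on top of `σ`, then continue. -/
def qL (σ : ι → Bool) : List ι → ((ι → Bool) → QC.DTree ι) → QC.DTree ι
  | [], k => k σ
  | i :: l, k => .node i (qL (Function.update σ i false) l k)
      (qL (Function.update σ i true) l k)

lemma qL_eval (x : ι → Bool) : ∀ (l : List ι) (σ : ι → Bool)
    (k : (ι → Bool) → QC.DTree ι),
    (qL σ l k).eval x = (k (fun j => if j ∈ l then x j else σ j)).eval x
  | [], σ, k => by simp [qL]
  | i :: l, σ, k => by
    have h : ∀ b : Bool, x i = b →
        (fun j => if j ∈ l then x j else Function.update σ i b j)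
          = fun j => if j ∈ i :: l then x j else σ j := by
      intro b hb
      funext j
      by_cases hjl : j ∈ l
      · simp [hjl]
      · by_cases hji : j = i
        · subst hji; simp [hjl, hb]
        · simp [hjl, hji, Function.update_of_ne hji]
    rcases Bool.dichotomy (x i) with hb | hb <;>
      simp only [qL, QC.DTree.eval, hb, if_true, if_false, qL_eval x l, h _ hb] <;> simp

lemma qL_depth (d : ℕ) : ∀ (l : List ι) (σ : ι → Bool)
    (k : (ι → Bool) → QC.DTree ι),
    (∀ τ, (k τ).depth ≤ d) → (qL σ l k).depth ≤ l.length + d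
  | [], σ, k, hk => by simpa [qL] using hk σ
  | i :: l, σ, k, hk => by
    simp only [qL, QC.DTree.depth, List.length_cons]
    have h0 := qL_depth d l (Function.update σ i false) k hk
    have h1 := qL_depth d l (Function.update σ i true) k hk
    omega

/-- There is a zero-input of `f` consistent with `σ` on `A`. -/
def ConsZ (f : QC.BFun ι) (A : Finset ι) (σ : ι → Bool) : Prop :=
  ∃ z, f z = false ∧ ∀ i ∈ A, z i = σ i

open Classical in
/-- The certificate-querying algorithm, with fuel `n`. -/
noncomputable def algo (f : QC.BFun ι) (n : ℕ) : Finset ι → (ι → Bool) → QC.DTree ι :=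
  Nat.rec (motive := fun _ => Finset ι → (ι → Bool) → QC.DTree ι)
    (fun A σ => if ConsZ f A σ then .leaf false else .leaf true)
    (fun _ prev A σ => if h : ConsZ f A σ then
        qL σ ((certOf f h.choose) \ A).toList
          (fun σ' => prev (A ∪ certOf f h.choose) σ')
      else .leaf true) n

open Classical in
lemma algo_zero (f : QC.BFun ι) (A : Finset ι) (σ : ι → Bool) :
    algo f 0 A σ = if ConsZ f A σ then .leaf false else .leaf true := rfl

open Classical in
lemma algo_succ (f : QC.BFun ι) (n : ℕ) (A : Finset ι) (σ : ι → Bool) :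
    algo f (n + 1) A σ = if h : ConsZ f A σ then
        qL σ ((certOf f h.choose) \ A).toList
          (fun σ' => algo f n (A ∪ certOf f h.choose) σ')
      else .leaf true := rfl

lemma algo_depth (f : QC.BFun ι) : ∀ (n : ℕ) (A : Finset ι) (σ : ι → Bool),
    (algo f n A σ).depth ≤ n * QC.Cb f false
  | 0, A, σ => by
    rw [algo_zero]
    by_cases h : ConsZ f A σ <;> simp [h, QC.DTree.depth]
  | n + 1, A, σ => by
    rw [algo_succ]
    by_cases h : ConsZ f A σ
    · rw [dif_pos h]
      have hz : f h.choose = false := h.choose_spec.1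
      have hcard : ((certOf f h.choose) \ A).toList.length ≤ QC.Cb f false := by
        rw [Finset.length_toList]
        calc ((certOf f h.choose) \ A).card ≤ (certOf f h.choose).card :=
              Finset.card_le_card Finset.sdiff_subset
          _ = QC.CAt f h.choose := certOf_card f _
          _ ≤ QC.Cb f false := by have := CAt_le_Cb f h.choose; rwa [hz] at this
      have hq := qL_depth (n * QC.Cb f false) ((certOf f h.choose) \ A).toList σ
        (fun σ' => algo f n (A ∪ certOf f h.choose) σ')
        (fun τ => algo_depth f n _ τ)
      calc (qL σ ((certOf f h.choose) \ A).toList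
            (fun σ' => algo f n (A ∪ certOf f h.choose) σ')).depth
          ≤ ((certOf f h.choose) \ A).toList.length + n * QC.Cb f false := hq
        _ ≤ QC.Cb f false + n * QC.Cb f false := by omega
        _ = (n + 1) * QC.Cb f false := by ring
    · rw [dif_neg h]; simp [QC.DTree.depth]

lemma algo_correct (f : QC.BFun ι) : ∀ (n : ℕ) (A : Finset ι) (σ : ι → Bool)
    (x : ι → Bool), (∀ i ∈ A, x i = σ i) →
    (f x = true → ∃ Sx : Finset ι, QC.IsCert f x Sx ∧ (Sx \ A).card ≤ n) →
    (algo f n A σ).eval x = f x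
  | 0, A, σ, x, hagr, hcert => by
    rw [algo_zero]
    by_cases h : ConsZ f A σ
    · rw [if_pos h]
      -- claim f x = false
      rcases Bool.dichotomy (f x) with hfx | hfx
      · simp [QC.DTree.eval, hfx]
      · exfalso
        obtain ⟨Sx, hSx, hc⟩ := hcert hfx
        have hsub : Sx ⊆ A := by
          intro i hi
          by_contra hiA
          have : i ∈ Sx \ A := Finset.mem_sdiff.2 ⟨hi, hiA⟩
          have := Finset.card_pos.2 ⟨i, this⟩
          omega
        obtain ⟨z, hz, hzagr⟩ := h
        have : f z = f x := hSx z (fun i hi => (hzagr i (hsub hi)).trans (hagr i (hsub hi)).symm)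
        rw [hz, hfx] at this
        exact Bool.false_ne_true this
    · rw [if_neg h]
      rcases Bool.dichotomy (f x) with hfx | hfx
      · exact absurd ⟨x, hfx, hagr⟩ h
      · simp [QC.DTree.eval, hfx]
  | n + 1, A, σ, x, hagr, hcert => by
    rw [algo_succ]
    by_cases h : ConsZ f A σ
    · rw [dif_pos h]
      set z := h.choose with hzdef
      have hz : f z = false := h.choose_spec.1
      have hzagr : ∀ i ∈ A, z i = σ i := h.choose_spec.2
      set S := certOf f z with hSdef
      have hScert : QC.IsCert f z S := certOf_isCert f z
      rw [qL_eval]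
      set σ' : ι → Bool := fun j => if j ∈ (S \ A).toList then x j else σ j with hσ'
      have hagr' : ∀ i ∈ A ∪ S, x i = σ' i := by
        intro i hi
        by_cases hmem : i ∈ (S \ A).toList
        · simp only [hσ', if_pos hmem]
        · have hiA : i ∈ A := by
            rcases Finset.mem_union.1 hi with hiA | hiS
            · exact hiA
            · by_contra hiA
              exact hmem (Finset.mem_toList.2 (Finset.mem_sdiff.2 ⟨hiS, hiA⟩))
          simp only [hσ', if_neg hmem]
          exact hagr i hiA
      apply algo_correct f n (A ∪ S) σ' x hagr'
      intro hfx
      obtain ⟨Sx, hSx, hc⟩ := hcert hfx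
      refine ⟨Sx, hSx, ?_⟩
      -- key claim: S meets Sx outside A
      have hkey : ∃ i, i ∈ Sx ∧ i ∈ S ∧ i ∉ A := by
        by_contra hno
        push_neg at hno
        set y : ι → Bool := fun i => if i ∈ S then z i else x i with hy
        have hy0 : f y = false := by
          rw [← hz]
          exact hScert y (fun i hi => by simp [hy, hi])
        have hy1 : f y = true := by
          rw [← hfx]
          refine hSx y (fun i hi => ?_)
          by_cases hiS : i ∈ S
          · have hiA : i ∈ A := hno i hi hiS
            simp only [hy, if_pos hiS]
            exact (hzagr i hiA).trans (hagr i hiA).symm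
          · simp [hy, hiS]
        rw [hy0] at hy1; exact Bool.false_ne_true hy1
      obtain ⟨i, hiSx, hiS, hiA⟩ := hkey
      have hss : Sx \ (A ∪ S) ⊂ Sx \ A := by
        refine ⟨Finset.sdiff_subset_sdiff le_rfl Finset.subset_union_left, ?_⟩
        intro hsub
        have : i ∈ Sx \ A := Finset.mem_sdiff.2 ⟨hiSx, hiA⟩
        have := hsub this
        rw [Finset.mem_sdiff] at this
        exact this.2 (Finset.mem_union_right _ hiS)
      have := Finset.card_lt_card hss
      omega
    · rw [dif_neg h]
      rcases Bool.dichotomy (f x) with hfx | hfx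
      · exact absurd ⟨x, hfx, hagr⟩ h
      · simp [QC.DTree.eval, hfx]

end Stmt4Aux

/-- `D(f) ≤ C_0(f) · C_1(f)`, and in particular `D(f) ≤ C(f)^2`. -/
theorem stmt4 {ι : Type*} [Fintype ι] [DecidableEq ι] (f : QC.BFun ι) :
    QC.D f ≤ QC.Cb f false * QC.Cb f true ∧ QC.D f ≤ QC.C f ^ 2 := by
  have hcomp : QC.Computes (algo f (QC.Cb f true) ∅ (fun _ => false)) f := by
    intro x
    apply algo_correct f _ ∅ _ x (by simp)
    intro hfx
    refine ⟨certOf f x, certOf_isCert f x, ?_⟩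
    rw [Finset.sdiff_empty, certOf_card]
    have := CAt_le_Cb f x
    rwa [hfx] at this
  have hD : QC.D f ≤ (algo f (QC.Cb f true) ∅ (fun _ => false)).depth :=
    Nat.sInf_le ⟨_, hcomp, rfl⟩
  have h1 : QC.D f ≤ QC.Cb f false * QC.Cb f true := by
    calc QC.D f ≤ _ := hD
      _ ≤ QC.Cb f true * QC.Cb f false := algo_depth f _ _ _
      _ = QC.Cb f false * QC.Cb f true := Nat.mul_comm _ _
  refine ⟨h1, h1.trans ?_⟩
  calc QC.Cb f false * QC.Cb f true ≤ QC.C f * QC.C f :=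
        Nat.mul_le_mul (Cb_le_C f false) (Cb_le_C f true)
    _ = QC.C f ^ 2 := (sq (QC.C f)).symm
end

section
/- For every total Boolean function f, the certificate complexity satisfies C(f) ≤ s(f) · bs(f) ≤ bs(f)^2, where s(f) is the (pointwise maximum) sensitivity of f. -/
section Aux

open QC

variable {ι : Type*} [Fintype ι] [DecidableEq ι]

lemma flip_empty (x : ι → Bool) : QC.flip x (∅ : Finset ι) = x := by
  funext j; simp [QC.flip]

lemma hasBS_zero (f : BFun ι) (x : ι → Bool) : HasBS f x 0 :=
  ⟨fun i => i.elim0, fun i => i.elim0, fun i => i.elim0⟩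

lemma hasBS_le_card {f : BFun ι} {x : ι → Bool} {k : ℕ} (h : HasBS f x k) :
    k ≤ Fintype.card ι := by
  obtain ⟨S, hd, hs⟩ := h
  have hne : ∀ i, (S i).Nonempty := by
    intro i
    rcases (S i).eq_empty_or_nonempty with h | h
    · exact absurd (by rw [h, flip_empty]) (hs i)
    · exact h
  calc k = ∑ _i : Fin k, 1 := by simp
    _ ≤ ∑ i : Fin k, (S i).card := Finset.sum_le_sum fun i _ => (hne i).card_pos
    _ = (Finset.univ.biUnion S).card :=
        (Finset.card_biUnion (fun i _ j _ hij => hd i j hij)).symm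
    _ ≤ Fintype.card ι := Finset.card_le_univ _

lemma bs_bddAbove (f : BFun ι) : BddAbove {k | ∃ x, HasBS f x k} :=
  ⟨Fintype.card ι, fun _k hk => hasBS_le_card hk.choose_spec⟩

lemma bsAt_bddAbove (f : BFun ι) (x : ι → Bool) : BddAbove {k | HasBS f x k} :=
  ⟨Fintype.card ι, fun _k hk => hasBS_le_card hk⟩

lemma sensAt_le_card (f : BFun ι) (x : ι → Bool) : sensAt f x ≤ Fintype.card ι :=
  Finset.card_le_univ _

lemma sens_bddAbove (f : BFun ι) : BddAbove (Set.range (sensAt f)) := by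
  refine ⟨Fintype.card ι, ?_⟩
  rintro _ ⟨x, rfl⟩
  exact sensAt_le_card f x

lemma sensAt_le_sens (f : BFun ι) (z : ι → Bool) : sensAt f z ≤ sens f :=
  le_csSup (sens_bddAbove f) ⟨z, rfl⟩

lemma flip_flip_single {x : ι → Bool} {B : Finset ι} {i : ι} (hi : i ∈ B) :
    QC.flip (QC.flip x B) {i} = QC.flip x (B.erase i) := by
  funext j
  simp only [QC.flip, Finset.mem_singleton, Finset.mem_erase]
  by_cases hji : j = i
  · subst hji; simp [hi]
  · simp [hji]

/-- A minimal sensitive block has size at most the sensitivity. -/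
lemma block_card_le_sens {f : BFun ι} {x : ι → Bool} {B : Finset ι}
    (hB : f (QC.flip x B) ≠ f x) (hmin : ∀ B' ⊂ B, f (QC.flip x B') = f x) :
    B.card ≤ sens f := by
  have hsub : B ⊆ Finset.univ.filter
      (fun i => f (QC.flip (QC.flip x B) {i}) ≠ f (QC.flip x B)) := by
    intro i hi
    simp only [Finset.mem_filter, Finset.mem_univ, true_and]
    rw [flip_flip_single hi]
    have h1 : f (QC.flip x (B.erase i)) = f x :=
      hmin _ (Finset.erase_ssubset hi)
    rw [h1]
    exact fun h => hB h.symm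
  calc B.card ≤ sensAt f (QC.flip x B) := Finset.card_le_card hsub
    _ ≤ sens f := sensAt_le_sens f _

lemma exists_minimal_block (f : BFun ι) (x : ι → Bool) (B : Finset ι)
    (hB : f (QC.flip x B) ≠ f x) :
    ∃ M ⊆ B, f (QC.flip x M) ≠ f x ∧ ∀ M' ⊂ M, f (QC.flip x M') = f x := by
  induction B using Finset.strongInductionOn with
  | _ B ih =>
    by_cases h : ∃ B' ⊂ B, f (QC.flip x B') ≠ f x
    · obtain ⟨B', hB', hne⟩ := h
      obtain ⟨M, hMB, h1, h2⟩ := ih B' hB' hne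
      exact ⟨M, hMB.trans hB'.subset, h1, h2⟩
    · push_neg at h
      exact ⟨B, le_refl _, hB, h⟩

lemma sens_le_bs (f : BFun ι) : sens f ≤ bs f := by
  have hne : Set.Nonempty (Set.range (sensAt f)) :=
    ⟨sensAt f (fun _ => false), ⟨_, rfl⟩⟩
  refine csSup_le hne ?_
  rintro _ ⟨x, rfl⟩
  refine le_csSup (bs_bddAbove f) ⟨x, ?_⟩
  show HasBS f x (Finset.univ.filter (fun i => f (QC.flip x {i}) ≠ f x)).card
  set T := Finset.univ.filter (fun i => f (QC.flip x {i}) ≠ f x) with hT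
  refine ⟨fun i => {(T.equivFin.symm i : ι)}, ?_, ?_⟩
  · intro i j hij
    simp only [Finset.disjoint_singleton]
    intro heq
    exact hij (T.equivFin.symm.injective (Subtype.ext heq))
  · intro i
    have hmem : (T.equivFin.symm i : ι) ∈ T := (T.equivFin.symm i).2
    exact (Finset.mem_filter.mp hmem).2

lemma CAt_le_sens_mul_bs (f : BFun ι) (x : ι → Bool) :
    CAt f x ≤ sens f * bs f := by
  set k := bsAt f x with hk
  have hmem : HasBS f x k := by
    have : k ∈ {k | HasBS f x k} :=
      Nat.sSup_mem ⟨0, hasBS_zero f x⟩ (bsAt_bddAbove f x)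
    exact this
  obtain ⟨S, hd, hs⟩ := hmem
  choose M hMsub hMsens hMmin using fun i => exists_minimal_block f x (S i) (hs i)
  set T := Finset.univ.biUnion M with hTdef
  have hcert : IsCert f x T := by
    intro y hy
    by_contra hne
    set D := Finset.univ.filter (fun i => y i ≠ x i) with hD
    have hyD : y = QC.flip x D := by
      funext j
      by_cases h : y j = x j
      · simp [QC.flip, hD, h]
      · have hb : y j = !x j := by
          cases hxj : x j <;> cases hyj : y j <;> simp_all
        simp [QC.flip, hD, h, hb]
    have hDdisj : ∀ i : Fin k, Disjoint D (M i) := by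
      intro i
      rw [Finset.disjoint_left]
      intro a haD haM
      rw [hD, Finset.mem_filter] at haD
      exact haD.2 (hy a (Finset.mem_biUnion.mpr ⟨i, Finset.mem_univ i, haM⟩))
    have hbs : HasBS f x (k + 1) := by
      refine ⟨Fin.cons D M, ?_, ?_⟩
      · intro i j
        refine Fin.cases ?_ ?_ i <;> clear i
        · refine Fin.cases ?_ ?_ j <;> clear j
          · intro h; exact absurd rfl h
          · intro j' _
            simp only [Fin.cons_zero, Fin.cons_succ]
            exact hDdisj j'
        · intro i'
          refine Fin.cases ?_ ?_ j <;> clear j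
          · intro _
            simp only [Fin.cons_zero, Fin.cons_succ]
            exact (hDdisj i').symm
          · intro j' hij
            simp only [Fin.cons_succ]
            refine ((hd i' j' fun h => hij ?_).mono (hMsub i') (hMsub j'))
            rw [h]
      · intro i
        refine Fin.cases ?_ ?_ i
        · rw [Fin.cons_zero, ← hyD]; exact hne
        · intro i'
          simp only [Fin.cons_succ]
          exact hMsens i'
    have : k + 1 ≤ k := by
      conv_rhs => rw [hk, bsAt]
      exact le_csSup (bsAt_bddAbove f x) hbs
    omega
  have hcard : T.card ≤ sens f * bs f := by
    have h1 : T.card = ∑ i : Fin k, (M i).card :=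
      Finset.card_biUnion (fun i _ j _ hij => (hd i j hij).mono (hMsub i) (hMsub j))
    have h2 : ∀ i : Fin k, (M i).card ≤ sens f :=
      fun i => block_card_le_sens (hMsens i) (hMmin i)
    have h3 : k ≤ bs f := le_csSup (bs_bddAbove f) ⟨x, ⟨S, hd, hs⟩⟩
    calc T.card = ∑ i : Fin k, (M i).card := h1
      _ ≤ ∑ _i : Fin k, sens f := Finset.sum_le_sum fun i _ => h2 i
      _ = k * sens f := by simp [Finset.sum_const, mul_comm]
      _ ≤ bs f * sens f := Nat.mul_le_mul_right _ h3
      _ = sens f * bs f := mul_comm _ _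
  exact le_trans (Nat.sInf_le ⟨T, hcert, rfl⟩) hcard

end Aux

/-- `C(f) ≤ s(f) · bs(f) ≤ bs(f)^2`. -/
theorem stmt5 {ι : Type*} [Fintype ι] [DecidableEq ι] (f : QC.BFun ι) :
    QC.C f ≤ QC.sens f * QC.bs f ∧ QC.sens f * QC.bs f ≤ QC.bs f ^ 2 := by
  constructor
  · have hne : Set.Nonempty (Set.range (QC.CAt f)) :=
      ⟨QC.CAt f (fun _ => false), ⟨_, rfl⟩⟩
    refine csSup_le hne ?_
    rintro _ ⟨x, rfl⟩
    exact CAt_le_sens_mul_bs f x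
  · rw [pow_two]
    exact Nat.mul_le_mul_right _ (sens_le_bs f)
end

section
/- For every total Boolean function f, D(f) ≤ C_1(f) · bs(f); combined with C_1(f) ≤ s(f)·bs(f) ≤ bs(f)^2, this yields D(f) ≤ bs(f)^3. -/
namespace QC

variable {ι : Type*} [Fintype ι] [DecidableEq ι]

section Aux

variable (f : BFun ι)

lemma flip_empty (x : ι → Bool) : flip x (∅ : Finset ι) = x := by
  funext i; simp [flip]

lemma block_nonempty {x : ι → Bool} {B : Finset ι} (h : f (flip x B) ≠ f x) : B.Nonempty := by
  rcases B.eq_empty_or_nonempty with rfl | hB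
  · rw [flip_empty] at h; exact absurd rfl h
  · exact hB

lemma hasBS_le_card {x : ι → Bool} {k : ℕ} (h : HasBS f x k) : k ≤ Fintype.card ι := by
  obtain ⟨S, hdisj, hsens⟩ := h
  have hne : ∀ i, (S i).Nonempty := fun i => block_nonempty f (hsens i)
  have hinj : Function.Injective (fun i => (hne i).choose) := by
    intro i j hij
    dsimp only at hij
    by_contra hne'
    exact Finset.disjoint_left.mp (hdisj i j hne') ((hne i).choose_spec)
      (by rw [hij]; exact (hne j).choose_spec)
  simpa using Fintype.card_le_of_injective _ hinj

lemma bddAbove_bsSet : BddAbove {k | ∃ x, HasBS f x k} :=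
  ⟨Fintype.card ι, fun _ ⟨_, h⟩ => hasBS_le_card f h⟩

lemma hasBS_le_bs {x : ι → Bool} {k : ℕ} (h : HasBS f x k) : k ≤ bs f :=
  le_csSup (bddAbove_bsSet f) ⟨x, h⟩

lemma isCert_univ (x : ι → Bool) : IsCert f x Finset.univ := by
  intro y hy
  have : y = x := funext fun i => hy i (Finset.mem_univ i)
  rw [this]

lemma CAt_le_card (x : ι → Bool) : CAt f x ≤ Fintype.card ι := by
  have : Fintype.card ι ∈ {k | ∃ S : Finset ι, IsCert f x S ∧ S.card = k} :=
    ⟨Finset.univ, isCert_univ f x, Finset.card_univ⟩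
  exact Nat.sInf_le this

lemma exists_cert (x : ι → Bool) : ∃ S : Finset ι, IsCert f x S ∧ S.card = CAt f x := by
  have hne : {k | ∃ S : Finset ι, IsCert f x S ∧ S.card = k}.Nonempty :=
    ⟨Finset.univ.card, Finset.univ, isCert_univ f x, rfl⟩
  exact Nat.sInf_mem hne

lemma CAt_le_Cb {x : ι → Bool} (hx : f x = true) : CAt f x ≤ Cb f true := by
  refine le_csSup ⟨Fintype.card ι, ?_⟩ ⟨x, hx, rfl⟩
  rintro k ⟨y, _, rfl⟩
  exact CAt_le_card f y

lemma sensAt_le_card (x : ι → Bool) : sensAt f x ≤ Fintype.card ι := by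
  classical
  simpa [sensAt] using Finset.card_filter_le Finset.univ (fun i => f (flip x {i}) ≠ f x)

lemma sensAt_le_sens (x : ι → Bool) : sensAt f x ≤ sens f :=
  le_csSup ⟨Fintype.card ι, by rintro k ⟨y, rfl⟩; exact sensAt_le_card f y⟩
    (Set.mem_range_self x)

lemma sensAt_le_bs (x : ι → Bool) : sensAt f x ≤ bs f := by
  classical
  refine hasBS_le_bs f (x := x) ?_
  set T := Finset.univ.filter (fun i => f (flip x {i}) ≠ f x) with hT
  refine ⟨fun i => {(T.equivFin.symm i : ι)}, ?_, ?_⟩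
  · intro i j hij
    refine Finset.disjoint_singleton.mpr ?_
    intro hval
    exact hij (T.equivFin.symm.injective (Subtype.ext hval) |>.symm ▸ rfl)
  · intro i
    exact (Finset.mem_filter.mp (T.equivFin.symm i).2).2

lemma sens_le_bs : sens f ≤ bs f := by
  refine csSup_le' ?_
  rintro k ⟨x, rfl⟩
  exact sensAt_le_bs f x

lemma exists_min_block (x : ι → Bool) :
    ∀ B : Finset ι, f (flip x B) ≠ f x →
      ∃ B' ⊆ B, f (flip x B') ≠ f x ∧ ∀ B'' ⊂ B', f (flip x B'') = f x := by
  intro B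
  induction B using Finset.strongInduction with
  | _ B ih =>
    intro h
    by_cases hc : ∃ B'' ⊂ B, f (flip x B'') ≠ f x
    · obtain ⟨B'', hsub, hB''⟩ := hc
      obtain ⟨B', h1, h2, h3⟩ := ih B'' hsub hB''
      exact ⟨B', h1.trans hsub.subset, h2, h3⟩
    · push_neg at hc
      exact ⟨B, Finset.Subset.refl B, h, hc⟩

lemma flip_flip_single {x : ι → Bool} {B : Finset ι} {i : ι} (hi : i ∈ B) :
    flip (flip x B) {i} = flip x (B.erase i) := by
  funext j
  by_cases hj : j = i
  · subst hj
    simp [flip, hi, Finset.mem_erase]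
  · simp [flip, hj, Finset.mem_erase, Finset.mem_singleton]

lemma min_block_card_le_sens {x : ι → Bool} {B : Finset ι}
    (h : f (flip x B) ≠ f x) (hmin : ∀ B'' ⊂ B, f (flip x B'') = f x) :
    B.card ≤ sens f := by
  classical
  set y := flip x B with hy
  have hsub : B ⊆ Finset.univ.filter (fun i => f (flip y {i}) ≠ f y) := by
    intro i hi
    rw [Finset.mem_filter]
    refine ⟨Finset.mem_univ i, ?_⟩
    rw [hy, flip_flip_single hi, hmin _ (Finset.erase_ssubset hi)]
    exact fun hc => h hc.symm
  calc B.card ≤ sensAt f y := Finset.card_le_card hsub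
    _ ≤ sens f := sensAt_le_sens f y

lemma extend_family {r : ℕ} (P : Finset ι → Prop) (B : Fin r → Finset ι) (D : Finset ι)
    (hB : ∀ j, P (B j)) (hD : P D)
    (hdisj : ∀ i j, i ≠ j → Disjoint (B i) (B j))
    (hDd : ∀ j, Disjoint D (B j)) :
    ∃ B' : Fin (r + 1) → Finset ι, (∀ j, P (B' j)) ∧
      ∀ i j, i ≠ j → Disjoint (B' i) (B' j) := by
  refine ⟨Fin.snoc B D, ?_, ?_⟩
  · intro j
    rcases Fin.eq_castSucc_or_eq_last j with ⟨j', rfl⟩ | rfl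
    · simpa using hB j'
    · simpa using hD
  · intro i j hij
    rcases Fin.eq_castSucc_or_eq_last i with ⟨i', rfl⟩ | rfl <;>
      rcases Fin.eq_castSucc_or_eq_last j with ⟨j', rfl⟩ | rfl
    · simpa using hdisj i' j' (fun h => hij (by rw [h]))
    · simpa using (hDd i').symm
    · simpa using hDd j'
    · exact absurd rfl hij

lemma CAt_le_sens_mul_bs (x : ι → Bool) : CAt f x ≤ sens f * bs f := by
  classical
  set fam : Finset (Finset ι) → Prop := fun F =>
    (∀ B ∈ F, f (flip x B) ≠ f x ∧ ∀ B'' ⊂ B, f (flip x B'') = f x) ∧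
    ∀ B ∈ F, ∀ B' ∈ F, B ≠ B' → Disjoint B B' with hfam
  have hbdd : BddAbove {k | ∃ F, fam F ∧ F.card = k} :=
    ⟨Fintype.card (Finset ι), by rintro k ⟨F, _, rfl⟩; exact Finset.card_le_univ F⟩
  have hne : {k | ∃ F, fam F ∧ F.card = k}.Nonempty :=
    ⟨0, ∅, ⟨by simp, by simp⟩, rfl⟩
  obtain ⟨F, hF, hFcard⟩ := Nat.sSup_mem hne hbdd
  -- maximality
  have hmax : ∀ B : Finset ι, f (flip x B) ≠ f x → (∀ B'' ⊂ B, f (flip x B'') = f x) →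
      (∀ B' ∈ F, Disjoint B B') → False := by
    intro B hBs hBmin hBd
    have hBne : B.Nonempty := block_nonempty f hBs
    have hBnotin : B ∉ F := by
      intro hBin
      obtain ⟨a, ha⟩ := hBne
      exact Finset.disjoint_left.mp (hBd B hBin) ha ha
    have hfam' : fam (insert B F) := by
      constructor
      · intro B' hB'
        rcases Finset.mem_insert.mp hB' with rfl | hB'
        · exact ⟨hBs, hBmin⟩
        · exact hF.1 B' hB'
      · intro B1 h1 B2 h2 h12
        rcases Finset.mem_insert.mp h1 with h1' | h1' <;>
          rcases Finset.mem_insert.mp h2 with h2' | h2'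
        · exact absurd (h1'.trans h2'.symm) h12
        · subst h1'; exact hBd B2 h2'
        · subst h2'; exact (hBd B1 h1').symm
        · exact hF.2 B1 h1' B2 h2' h12
    have hle : (insert B F).card ≤ sSup {k | ∃ F, fam F ∧ F.card = k} :=
      le_csSup hbdd ⟨insert B F, hfam', rfl⟩
    rw [Finset.card_insert_of_notMem hBnotin, ← hFcard] at hle
    omega
  set S : Finset ι := F.biUnion id with hS
  have hcert : IsCert f x S := by
    intro y hy
    by_contra hne'
    set D : Finset ι := Finset.univ.filter (fun i => y i ≠ x i) with hD
    have hflip : flip x D = y := by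
      funext j
      by_cases hj : y j = x j
      · simp [flip, hD, hj]
      · have : (!x j) = y j := by
          cases hxj : x j <;> cases hyj : y j <;> simp_all
        simp [flip, hD, hj, this]
    have hDs : f (flip x D) ≠ f x := by rw [hflip]; exact hne'
    obtain ⟨B', hB'sub, hB's, hB'min⟩ := exists_min_block f x D hDs
    refine hmax B' hB's hB'min ?_
    intro B'' hB''
    rw [Finset.disjoint_left]
    intro a haB' haB''
    have haD := hB'sub haB'
    rw [hD, Finset.mem_filter] at haD
    have haS : a ∈ S := Finset.mem_biUnion.mpr ⟨B'', hB'', haB''⟩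
    exact haD.2 (hy a haS)
  have hFbs : F.card ≤ bs f := by
    refine hasBS_le_bs f (x := x) ?_
    refine ⟨fun i => (F.equivFin.symm i : Finset ι), ?_, ?_⟩
    · intro i j hij
      refine hF.2 _ (F.equivFin.symm i).2 _ (F.equivFin.symm j).2 ?_
      intro hv
      exact hij (F.equivFin.symm.injective (Subtype.ext hv))
    · intro i
      exact (hF.1 _ (F.equivFin.symm i).2).1
  have hScard : S.card ≤ sens f * bs f := by
    calc S.card ≤ ∑ B ∈ F, (id B).card := Finset.card_biUnion_le
      _ ≤ ∑ _B ∈ F, sens f := by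
          refine Finset.sum_le_sum ?_
          intro B hB
          exact min_block_card_le_sens f (hF.1 B hB).1 (hF.1 B hB).2
      _ = F.card * sens f := by rw [Finset.sum_const, smul_eq_mul]
      _ ≤ bs f * sens f := Nat.mul_le_mul_right _ hFbs
      _ = sens f * bs f := Nat.mul_comm _ _
  exact le_trans (Nat.sInf_le ⟨S, hcert, rfl⟩) hScard

lemma Cb_le_sens_mul_bs : Cb f true ≤ sens f * bs f := by
  refine csSup_le' ?_
  rintro k ⟨x, _, rfl⟩
  exact CAt_le_sens_mul_bs f x

/-! ### The decision-tree algorithm -/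

/-- `x` is consistent with the partial assignment recorded by `(Q, σ)`. -/
def Cons (Q : Finset ι) (σ : ι → Bool) (x : ι → Bool) : Prop := ∀ i ∈ Q, x i = σ i

/-- Query all variables in `L`, recording the answers in `σ`, then continue with `k`. -/
def queryList : List ι → ((ι → Bool) → DTree ι) → (ι → Bool) → DTree ι
  | [], k, σ => k σ
  | i :: L, k, σ => .node i (queryList L k (Function.update σ i false))
      (queryList L k (Function.update σ i true))

lemma queryList_eval (L : List ι) (k : (ι → Bool) → DTree ι) (σ x : ι → Bool) :
    (queryList L k σ).eval x = (k (fun j => if j ∈ L then x j else σ j)).eval x := by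
  induction L generalizing σ with
  | nil => simp [queryList]
  | cons i L ih =>
    simp only [queryList, DTree.eval]
    cases hxi : x i with
    | false =>
      rw [if_neg (by simp [hxi]), ih]
      congr 2
      funext j
      by_cases hj : j ∈ L
      · simp [hj]
      · by_cases hji : j = i
        · subst hji; simp [hj, Function.update, hxi]
        · simp [hj, hji, Function.update]
    | true =>
      rw [if_pos (by simp [hxi]), ih]
      congr 2
      funext j
      by_cases hj : j ∈ L
      · simp [hj]
      · by_cases hji : j = i
        · subst hji; simp [hj, Function.update, hxi]
        · simp [hj, hji, Function.update]

lemma queryList_depth (L : List ι) (k : (ι → Bool) → DTree ι) (σ : ι → Bool) (d : ℕ)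
    (h : ∀ σ', (k σ').depth ≤ d) : (queryList L k σ).depth ≤ L.length + d := by
  induction L generalizing σ with
  | nil => simpa [queryList] using h σ
  | cons i L ih =>
    simp only [queryList, DTree.depth, List.length_cons]
    have h0 := ih (Function.update σ i false)
    have h1 := ih (Function.update σ i true)
    omega

open Classical in
/-- The adaptive certificate-querying algorithm. -/
noncomputable def solve (f : BFun ι) : ℕ → Finset ι → (ι → Bool) → DTree ι
  | 0, Q, σ => if ∃ z, Cons Q σ z ∧ f z = true then .leaf true else .leaf false
  | t+1, Q, σ =>
    if h : ∃ z, Cons Q σ z ∧ f z = true then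
      queryList ((exists_cert f h.choose).choose.toList
        : List ι) (fun σ' => solve f t (Q ∪ (exists_cert f h.choose).choose) σ') σ
    else .leaf false

/-- The invariant: every consistent 0-input already has `r` disjoint sensitive
blocks inside the queried set. -/
def Inv (f : BFun ι) (r : ℕ) (Q : Finset ι) (σ : ι → Bool) : Prop :=
  ∀ y, Cons Q σ y → f y = false → ∃ B : Fin r → Finset ι,
    (∀ j, B j ⊆ Q) ∧ (∀ i j, i ≠ j → Disjoint (B i) (B j)) ∧
    ∀ j, f (flip y (B j)) = true

lemma inv_hasBS {r : ℕ} {Q : Finset ι} {σ : ι → Bool} (hInv : Inv f r Q σ)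
    {y0 z : ι → Bool} (hy0 : Cons Q σ y0) (hy0f : f y0 = false)
    (hz : Cons Q σ z) (hzf : f z = true) : HasBS f y0 (r + 1) := by
  classical
  obtain ⟨B, hBQ, hBd, hBs⟩ := hInv y0 hy0 hy0f
  set D : Finset ι := Finset.univ.filter (fun i => y0 i ≠ z i) with hD
  have hflip : flip y0 D = z := by
    funext j
    by_cases hj : y0 j = z j
    · simp [flip, hD, hj]
    · have : (!y0 j) = z j := by
        cases h1 : y0 j <;> cases h2 : z j <;> simp_all
      simp [flip, hD, hj, this]
  have hDQ : ∀ j ∈ Q, j ∉ D := by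
    intro j hj hjD
    rw [hD, Finset.mem_filter] at hjD
    exact hjD.2 ((hy0 j hj).trans (hz j hj).symm)
  obtain ⟨B', hB'P, hB'd⟩ := extend_family (fun T => f (flip y0 T) = true) B D hBs
    (by show f (flip y0 D) = true; rw [hflip]; exact hzf) hBd
    (by
      intro j
      rw [Finset.disjoint_left]
      intro a haD haB
      exact hDQ a (hBQ j haB) haD)
  exact ⟨B', hB'd, fun j => by rw [hB'P j, hy0f]; simp⟩

lemma solve_correct (t : ℕ) : ∀ (r : ℕ) (Q : Finset ι) (σ : ι → Bool),
    Inv f r Q σ → bs f ≤ r + t →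
    ∀ x, Cons Q σ x → (solve f t Q σ).eval x = f x := by
  induction t with
  | zero =>
    intro r Q σ hInv hr x hx
    rw [solve]
    by_cases h : ∃ z, Cons Q σ z ∧ f z = true
    · rw [if_pos h]
      cases hfx : f x with
      | true => rfl
      | false =>
        obtain ⟨z, hz, hzf⟩ := h
        have := hasBS_le_bs f (inv_hasBS f hInv hx hfx hz hzf)
        omega
    · rw [if_neg h]
      cases hfx : f x with
      | true => exact absurd ⟨x, hx, hfx⟩ h
      | false => rfl
  | succ t ih =>
    intro r Q σ hInv hr x hx
    rw [solve]
    by_cases h : ∃ z, Cons Q σ z ∧ f z = true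
    · rw [dif_pos h]
      obtain ⟨hzc, hzf⟩ := h.choose_spec
      obtain ⟨hScert, _⟩ := (exists_cert f h.choose).choose_spec
      set z := h.choose with hzdef
      set S := (exists_cert f h.choose).choose with hSdef
      rw [queryList_eval]
      set σ' : ι → Bool := fun j => if j ∈ S.toList then x j else σ j with hσ'
      have hσ'S : ∀ j ∈ S, σ' j = x j := by
        intro j hj
        show (if j ∈ S.toList then x j else σ j) = x j
        rw [if_pos (Finset.mem_toList.mpr hj)]
      have hσ'Q : ∀ j, j ∉ S → σ' j = σ j := by
        intro j hj
        show (if j ∈ S.toList then x j else σ j) = σ j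
        rw [if_neg (fun hc => hj (Finset.mem_toList.mp hc))]
      refine ih (r + 1) (Q ∪ S) σ' ?_ (by omega) x ?_
      · -- invariant
        intro y hy hyf
        have hyQ : Cons Q σ y := by
          intro i hi
          by_cases hiS : i ∈ S
          · rw [hy i (Finset.mem_union_left S hi), hσ'S i hiS]
            exact hx i hi
          · rw [hy i (Finset.mem_union_left S hi), hσ'Q i hiS]
        obtain ⟨B, hBQ, hBd, hBs⟩ := hInv y hyQ hyf
        set Dn : Finset ι := S.filter (fun i => y i ≠ z i) with hDn
        have hDnS : Dn ⊆ S := Finset.filter_subset _ _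
        have hDnQ : ∀ i ∈ Q, i ∉ Dn := by
          intro i hi hiDn
          rw [hDn, Finset.mem_filter] at hiDn
          refine hiDn.2 ?_
          have h1 : y i = σ' i := hy i (Finset.mem_union_left S hi)
          have h2 : z i = σ i := hzc i hi
          by_cases hiS : i ∈ S
          · rw [h1, hσ'S i hiS, h2, ← hx i hi]
          · rw [h1, hσ'Q i hiS, h2]
        have hDnflip : f (flip y Dn) = true := by
          rw [← hzf]
          refine hScert (flip y Dn) ?_
          intro i hiS
          by_cases hiy : y i = z i
          · have : i ∉ Dn := by rw [hDn, Finset.mem_filter]; tauto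
            simp [flip, this, hiy]
          · have hiDn : i ∈ Dn := by rw [hDn, Finset.mem_filter]; exact ⟨hiS, hiy⟩
            have : (!y i) = z i := by
              cases h1 : y i <;> cases h2 : z i <;> simp_all
            simp [flip, hiDn, this]
        obtain ⟨B', hB'P, hB'd⟩ := extend_family
          (fun T => T ⊆ Q ∪ S ∧ f (flip y T) = true) B Dn
          (fun j => ⟨(hBQ j).trans (Finset.subset_union_left), hBs j⟩)
          ⟨hDnS.trans Finset.subset_union_right, hDnflip⟩ hBd
          (by
            intro j
            rw [Finset.disjoint_left]
            intro a haDn haB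
            exact hDnQ a (hBQ j haB) haDn)
        exact ⟨B', fun j => (hB'P j).1, hB'd, fun j => (hB'P j).2⟩
      · -- consistency of x
        intro i hi
        by_cases hiS : i ∈ S
        · exact (hσ'S i hiS).symm
        · rcases Finset.mem_union.mp hi with hiQ | hiS'
          · rw [hσ'Q i hiS]; exact hx i hiQ
          · exact absurd hiS' hiS
    · rw [dif_neg h]
      cases hfx : f x with
      | true => exact absurd ⟨x, hx, hfx⟩ h
      | false => rfl

lemma solve_depth (t : ℕ) : ∀ (Q : Finset ι) (σ : ι → Bool),
    (solve f t Q σ).depth ≤ t * Cb f true := by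
  induction t with
  | zero =>
    intro Q σ
    rw [solve]
    split <;> simp [DTree.depth]
  | succ t ih =>
    intro Q σ
    rw [solve]
    by_cases h : ∃ z, Cons Q σ z ∧ f z = true
    · rw [dif_pos h]
      obtain ⟨_, hzf⟩ := h.choose_spec
      obtain ⟨_, hScard⟩ := (exists_cert f h.choose).choose_spec
      have hlen : ((exists_cert f h.choose).choose.toList).length ≤ Cb f true := by
        rw [Finset.length_toList, hScard]
        exact CAt_le_Cb f hzf
      have := queryList_depth ((exists_cert f h.choose).choose.toList)
        (fun σ' => solve f t (Q ∪ (exists_cert f h.choose).choose) σ') σ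
        (t * Cb f true) (fun σ' => ih _ σ')
      calc (queryList _ _ σ).depth ≤ _ := this
        _ ≤ Cb f true + t * Cb f true := by omega
        _ = (t + 1) * Cb f true := by ring
    · rw [dif_neg h]
      simp [DTree.depth]

lemma D_le_Cb_mul_bs : D f ≤ Cb f true * bs f := by
  classical
  set T := solve f (bs f) ∅ (fun _ => false) with hT
  have hInv0 : Inv f 0 ∅ (fun _ => false) := by
    intro y _ _
    exact ⟨Fin.elim0, fun j => j.elim0, fun i => i.elim0, fun j => j.elim0⟩
  have hcomp : Computes T f := by
    intro x
    exact solve_correct f (bs f) 0 ∅ (fun _ => false) hInv0 (by omega) x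
      (by intro i hi; exact absurd hi (Finset.notMem_empty i))
  have hdepth : T.depth ≤ Cb f true * bs f := by
    rw [Nat.mul_comm]
    exact solve_depth f (bs f) ∅ (fun _ => false)
  exact le_trans (Nat.sInf_le ⟨T, hcomp, rfl⟩) hdepth

end Aux

end QC

/-- `D(f) ≤ C_1(f) · bs(f)`; with `C_1(f) ≤ s(f)·bs(f) ≤ bs(f)^2`
this yields `D(f) ≤ bs(f)^3`. -/
theorem stmt6 {ι : Type*} [Fintype ι] [DecidableEq ι] (f : QC.BFun ι) :
    QC.D f ≤ QC.Cb f true * QC.bs f ∧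
    QC.Cb f true ≤ QC.sens f * QC.bs f ∧
    QC.sens f * QC.bs f ≤ QC.bs f ^ 2 ∧
    QC.D f ≤ QC.bs f ^ 3 := by
  have h1 : QC.D f ≤ QC.Cb f true * QC.bs f := QC.D_le_Cb_mul_bs f
  have h2 : QC.Cb f true ≤ QC.sens f * QC.bs f := QC.Cb_le_sens_mul_bs f
  have h3 : QC.sens f * QC.bs f ≤ QC.bs f ^ 2 := by
    have := QC.sens_le_bs f
    calc QC.sens f * QC.bs f ≤ QC.bs f * QC.bs f := Nat.mul_le_mul_right _ this
      _ = QC.bs f ^ 2 := (sq (QC.bs f)).symm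
  refine ⟨h1, h2, h3, ?_⟩
  calc QC.D f ≤ QC.Cb f true * QC.bs f := h1
    _ ≤ (QC.sens f * QC.bs f) * QC.bs f := Nat.mul_le_mul_right _ h2
    _ ≤ QC.bs f ^ 2 * QC.bs f := Nat.mul_le_mul_right _ h3
    _ = QC.bs f ^ 3 := by ring
end
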